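/- The I-projection map from 𝒞(P_1,Q_1) to 𝒞(P_2,Q_2) is continuous on its domain: if S_n → S in ℓ_1, all within the domain of the I-projection, then I_proj(S_n) → I_proj(S). -/

import Mathlib

open Finset Filter Topology

def IsProbVec {n : ℕ} (P : Fin n → ℝ) : Prop :=
  (∀ i, 0 ≤ P i) ∧ ∑ i, P i = 1

def supp {α : Type*} (P : α → ℝ) : Set α := {i | 0 < P i}

def supp2 {n m : ℕ} (S : Fin n → Fin m → ℝ) : Set (Fin n × Fin m) :=
  {p | 0 < S p.1 p.2}

def Coupling {n m : ℕ} (P : Fin n → ℝ) (Q : Fin m → ℝ) : Set (Fin n → Fin m → ℝ) :=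
  {S | (∀ i j, 0 ≤ S i j) ∧ (∀ i, ∑ j, S i j = P i) ∧ (∀ j, ∑ i, S i j = Q j)}

/-- Kullback-Leibler divergence of bivariate distributions, as a real-valued sum
(valid, with the convention `0 log 0 = 0`, whenever `supp2 T ⊆ supp2 S`). -/
noncomputable def D2 {n m : ℕ} (T S : Fin n → Fin m → ℝ) : ℝ :=
  ∑ i, ∑ j, T i j * Real.log (T i j / S i j)

/-- `T'` is an I-projection of `S` onto `𝒯`: it is absolutely continuous w.r.t. `S`
(equivalently, `D(T'‖S) < ∞`) and minimizes the divergence among all such elements of `𝒯`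
(elements with `¬ supp2 T ⊆ supp2 S` have infinite divergence). -/
def IsIProj {n m : ℕ} (S : Fin n → Fin m → ℝ) (𝒯 : Set (Fin n → Fin m → ℝ))
    (T' : Fin n → Fin m → ℝ) : Prop :=
  T' ∈ 𝒯 ∧ supp2 T' ⊆ supp2 S ∧ ∀ T ∈ 𝒯, supp2 T ⊆ supp2 S → D2 T' S ≤ D2 T S

noncomputable def prodDist {n m : ℕ} (P : Fin n → ℝ) (Q : Fin m → ℝ) :
    Fin n → Fin m → ℝ := fun i j => P i * Q j

/-- KL divergence of univariate distributions. -/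
noncomputable def Dv {n : ℕ} (P Q : Fin n → ℝ) : ℝ :=
  ∑ i, P i * Real.log (P i / Q i)

def GeomEquiv {n m : ℕ} (C1 C2 : Set (Fin n → Fin m → ℝ)) : Prop :=
  (∀ S ∈ C1, ∃ T ∈ C2, supp2 T = supp2 S) ∧ (∀ T ∈ C2, ∃ S ∈ C1, supp2 S = supp2 T)

/- ### Auxiliary lemmas -/

lemma aux_mul_log_ge {t : ℝ} (ht : 0 ≤ t) : -1 ≤ t * Real.log t := by
  rcases eq_or_lt_of_le ht with h | h
  · simp [← h]
  · have h1 : Real.log t⁻¹ ≤ t⁻¹ - 1 := Real.log_le_sub_one_of_pos (by positivity)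
    rw [Real.log_inv] at h1
    have h2 : 1 - t⁻¹ ≤ Real.log t := by linarith
    have h3 := mul_le_mul_of_nonneg_left h2 ht
    have h4 : t * t⁻¹ = 1 := mul_inv_cancel₀ (ne_of_gt h)
    nlinarith

lemma term_split {t s : ℝ} (ht : 0 ≤ t) (hst : 0 < t → 0 < s) :
    t * Real.log (t / s) = t * Real.log t - t * Real.log s := by
  rcases eq_or_lt_of_le ht with h | h
  · simp [← h]
  · rw [Real.log_div (ne_of_gt h) (ne_of_gt (hst h))]; ring

lemma term_ge_neg_one {t s : ℝ} (ht : 0 ≤ t) (hs1 : s ≤ 1) (hst : 0 < t → 0 < s) :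
    -1 ≤ t * Real.log (t / s) := by
  rw [term_split ht hst]
  rcases eq_or_lt_of_le ht with h | h
  · simp [← h]
  · have hs := hst h
    have hlogs : Real.log s ≤ 0 := Real.log_nonpos (le_of_lt hs) hs1
    have h1 := aux_mul_log_ge ht
    nlinarith

lemma mid_mul_log_le {a b : ℝ} (ha : 0 ≤ a) (hb : 0 ≤ b) :
    ((a + b) / 2) * Real.log ((a + b) / 2)
      ≤ (a * Real.log a + b * Real.log b) / 2 := by
  have := Real.convexOn_mul_log.2 (Set.mem_Ici.2 ha) (Set.mem_Ici.2 hb)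
    (by norm_num : (0:ℝ) ≤ 1/2) (by norm_num : (0:ℝ) ≤ 1/2) (by norm_num)
  simp only [smul_eq_mul] at this
  have h2 : (1/2 : ℝ) * a + (1/2) * b = (a + b) / 2 := by ring
  rw [h2] at this
  linarith

lemma mid_mul_log_lt {a b : ℝ} (ha : 0 ≤ a) (hb : 0 ≤ b) (hab : a ≠ b) :
    ((a + b) / 2) * Real.log ((a + b) / 2)
      < (a * Real.log a + b * Real.log b) / 2 := by
  have := Real.strictConvexOn_mul_log.2 (Set.mem_Ici.2 ha) (Set.mem_Ici.2 hb) hab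
    (by norm_num : (0:ℝ) < 1/2) (by norm_num : (0:ℝ) < 1/2) (by norm_num)
  simp only [smul_eq_mul] at this
  have h2 : (1/2 : ℝ) * a + (1/2) * b = (a + b) / 2 := by ring
  rw [h2] at this
  linarith

lemma term_mid_le {a b s : ℝ} (ha : 0 ≤ a) (hb : 0 ≤ b)
    (has : 0 < a → 0 < s) (hbs : 0 < b → 0 < s) :
    ((a + b) / 2) * Real.log (((a + b) / 2) / s)
      ≤ (a * Real.log (a / s) + b * Real.log (b / s)) / 2 := by
  have hm : 0 ≤ (a + b) / 2 := by positivity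
  have hms : 0 < (a + b) / 2 → 0 < s := by
    intro h
    rcases (lt_or_ge 0 a) with h' | h'
    · exact has h'
    · exact hbs (by nlinarith [le_antisymm h' ha])
  rw [term_split ha has, term_split hb hbs, term_split hm hms]
  have := mid_mul_log_le ha hb
  have h3 : ((a + b) / 2) * Real.log s = (a * Real.log s + b * Real.log s) / 2 := by ring
  linarith

lemma term_mid_lt {a b s : ℝ} (ha : 0 ≤ a) (hb : 0 ≤ b) (hab : a ≠ b)
    (has : 0 < a → 0 < s) (hbs : 0 < b → 0 < s) :
    ((a + b) / 2) * Real.log (((a + b) / 2) / s)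
      < (a * Real.log (a / s) + b * Real.log (b / s)) / 2 := by
  have hm : 0 ≤ (a + b) / 2 := by positivity
  have hms : 0 < (a + b) / 2 → 0 < s := by
    intro h
    rcases (lt_or_ge 0 a) with h' | h'
    · exact has h'
    · exact hbs (by nlinarith [le_antisymm h' ha])
  rw [term_split ha has, term_split hb hbs, term_split hm hms]
  have := mid_mul_log_lt ha hb hab
  have h3 : ((a + b) / 2) * Real.log s = (a * Real.log s + b * Real.log s) / 2 := by ring
  linarith

lemma coupling_le_one {n m : ℕ} {P : Fin n → ℝ} {Q : Fin m → ℝ} {A : Fin n → Fin m → ℝ}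
    (hA : A ∈ Coupling P Q) (hP : IsProbVec P) (i : Fin n) (j : Fin m) : A i j ≤ 1 := by
  have h1 : A i j ≤ ∑ j', A i j' :=
    Finset.single_le_sum (fun j' _ => hA.1 i j') (mem_univ j)
  have h2 : P i ≤ ∑ i', P i' :=
    Finset.single_le_sum (fun i' _ => hP.1 i') (mem_univ i)
  rw [hA.2.1 i] at h1
  rw [hP.2] at h2
  linarith

/-- Uniqueness of the I-projection onto a coupling polytope. -/
lemma iproj_unique {n m : ℕ} {P : Fin n → ℝ} {Q : Fin m → ℝ} {S T₁ T₂ : Fin n → Fin m → ℝ}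
    (h₁ : IsIProj S (Coupling P Q) T₁) (h₂ : IsIProj S (Coupling P Q) T₂) : T₁ = T₂ := by
  by_contra hne
  have hne' : ∃ i j, T₁ i j ≠ T₂ i j := by
    by_contra h
    push_neg at h
    exact hne (funext fun i => funext fun j => h i j)
  obtain ⟨i₀, j₀, hij⟩ := hne'
  set M : Fin n → Fin m → ℝ := fun i j => (T₁ i j + T₂ i j) / 2 with hM
  have hT₁0 := h₁.1.1
  have hT₂0 := h₂.1.1
  have hMC : M ∈ Coupling P Q := by
    refine ⟨fun i j => by have := hT₁0 i j; have := hT₂0 i j; positivity, fun i => ?_, fun j => ?_⟩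
    · simp only [hM]
      rw [← Finset.sum_div, Finset.sum_add_distrib, h₁.1.2.1 i, h₂.1.2.1 i]
      ring
    · simp only [hM]
      rw [← Finset.sum_div, Finset.sum_add_distrib, h₁.1.2.2 j, h₂.1.2.2 j]
      ring
  have hsupp1 : ∀ i j, 0 < T₁ i j → 0 < S i j := fun i j h =>
    h₁.2.1 (show (0:ℝ) < T₁ (i, j).1 (i, j).2 from h)
  have hsupp2 : ∀ i j, 0 < T₂ i j → 0 < S i j := fun i j h =>
    h₂.2.1 (show (0:ℝ) < T₂ (i, j).1 (i, j).2 from h)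
  have hMsupp : supp2 M ⊆ supp2 S := by
    intro p hp
    simp only [supp2, Set.mem_setOf_eq, hM] at hp ⊢
    rcases lt_or_ge 0 (T₁ p.1 p.2) with h | h
    · exact hsupp1 p.1 p.2 h
    · have h2 : 0 < T₂ p.1 p.2 := by nlinarith [hT₂0 p.1 p.2, le_antisymm h (hT₁0 p.1 p.2)]
      exact hsupp2 p.1 p.2 h2
  have hd : D2 T₁ S = D2 T₂ S :=
    le_antisymm (h₁.2.2 T₂ h₂.1 h₂.2.1) (h₂.2.2 T₁ h₁.1 h₁.2.1)
  have hlt : D2 M S < (D2 T₁ S + D2 T₂ S) / 2 := by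
    have inner_le : ∀ i, ∑ j, M i j * Real.log (M i j / S i j)
        ≤ ∑ j, (T₁ i j * Real.log (T₁ i j / S i j) + T₂ i j * Real.log (T₂ i j / S i j)) / 2 :=
      fun i => Finset.sum_le_sum fun j _ =>
        term_mid_le (hT₁0 i j) (hT₂0 i j) (hsupp1 i j) (hsupp2 i j)
    have inner_lt : ∑ j, M i₀ j * Real.log (M i₀ j / S i₀ j)
        < ∑ j, (T₁ i₀ j * Real.log (T₁ i₀ j / S i₀ j)
            + T₂ i₀ j * Real.log (T₂ i₀ j / S i₀ j)) / 2 := by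
      refine Finset.sum_lt_sum (fun j _ =>
        term_mid_le (hT₁0 i₀ j) (hT₂0 i₀ j) (hsupp1 i₀ j) (hsupp2 i₀ j)) ⟨j₀, mem_univ j₀, ?_⟩
      exact term_mid_lt (hT₁0 i₀ j₀) (hT₂0 i₀ j₀) hij (hsupp1 i₀ j₀) (hsupp2 i₀ j₀)
    have houter : D2 M S < ∑ i, ∑ j,
        (T₁ i j * Real.log (T₁ i j / S i j) + T₂ i j * Real.log (T₂ i j / S i j)) / 2 :=
      Finset.sum_lt_sum (fun i _ => inner_le i) ⟨i₀, mem_univ i₀, inner_lt⟩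
    have hsum : ∑ i, ∑ j,
        (T₁ i j * Real.log (T₁ i j / S i j) + T₂ i j * Real.log (T₂ i j / S i j)) / 2
        = (D2 T₁ S + D2 T₂ S) / 2 := by
      simp only [D2, ← Finset.sum_div, Finset.sum_add_distrib]
    rwa [hsum] at houter
  have := h₁.2.2 M hMC hMsupp
  rw [hd] at this hlt
  linarith

/-- Continuity of `D2 T ·` at a point with compatible support. -/
lemma tendsto_D2_fixed {n m : ℕ} {T : Fin n → Fin m → ℝ} {Sk : ℕ → Fin n → Fin m → ℝ}
    {Sl : Fin n → Fin m → ℝ} (hT0 : ∀ i j, 0 ≤ T i j)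
    (hsupp : ∀ i j, 0 < T i j → 0 < Sl i j)
    (hconv : ∀ i j, Tendsto (fun k => Sk k i j) atTop (𝓝 (Sl i j))) :
    Tendsto (fun k => D2 T (Sk k)) atTop (𝓝 (D2 T Sl)) := by
  unfold D2
  refine tendsto_finset_sum _ fun i _ => tendsto_finset_sum _ fun j _ => ?_
  rcases eq_or_lt_of_le (hT0 i j) with h | h
  · simp [← h]
  · have hSl : 0 < Sl i j := hsupp i j h
    have h1 : Tendsto (fun k => T i j / Sk k i j) atTop (𝓝 (T i j / Sl i j)) :=
      (tendsto_const_nhds.div (hconv i j) (ne_of_gt hSl))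
    have h2 : Tendsto (fun k => Real.log (T i j / Sk k i j)) atTop
        (𝓝 (Real.log (T i j / Sl i j))) :=
      (Real.continuousAt_log (by positivity)).tendsto.comp h1
    exact tendsto_const_nhds.mul h2

lemma eventually_term_ge {tk sk : ℕ → ℝ} {t sl : ℝ}
    (htk : Tendsto tk atTop (𝓝 t)) (hsk : Tendsto sk atTop (𝓝 sl))
    (ht0 : ∀ k, 0 ≤ tk k) (hsk1 : ∀ k, sk k ≤ 1)
    (hsupp : ∀ k, 0 < tk k → 0 < sk k) (hsl0 : 0 ≤ sl)
    (ht'0 : sl = 0 → t = 0) {δ : ℝ} (hδ : 0 < δ) :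
    ∀ᶠ k in atTop, t * Real.log (t / sl) - δ ≤ tk k * Real.log (tk k / sk k) := by
  rcases eq_or_lt_of_le hsl0 with h0 | hpos
  · have ht : t = 0 := ht'0 h0.symm
    have h1 : Tendsto (fun k => tk k * Real.log (tk k)) atTop (𝓝 0) := by
      have := (Real.continuous_mul_log.tendsto t).comp htk
      simpa [ht, Function.comp_def] using this
    have h2 : ∀ᶠ k in atTop, -δ ≤ tk k * Real.log (tk k) :=
      h1.eventually (eventually_ge_nhds (by linarith))
    filter_upwards [h2] with k hk
    have h3 : tk k * Real.log (tk k) ≤ tk k * Real.log (tk k / sk k) := by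
      rcases eq_or_lt_of_le (ht0 k) with h | h
      · simp [← h]
      · have hs := hsupp k h
        have hlogs : Real.log (sk k) ≤ 0 := Real.log_nonpos (le_of_lt hs) (hsk1 k)
        rw [term_split (ht0 k) (hsupp k)]
        nlinarith
    have h4 : t * Real.log (t / sl) = 0 := by simp [ht]
    rw [h4]
    linarith
  · have ht0' : 0 ≤ t := le_of_tendsto_of_tendsto' tendsto_const_nhds htk fun k => ht0 k
    have hconv : Tendsto (fun k => tk k * Real.log (tk k) - tk k * Real.log (sk k)) atTop
        (𝓝 (t * Real.log t - t * Real.log sl)) := by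
      refine Tendsto.sub ?_ ?_
      · exact (Real.continuous_mul_log.tendsto t).comp htk
      · exact htk.mul ((Real.continuousAt_log (ne_of_gt hpos)).tendsto.comp hsk)
    have hconv' : Tendsto (fun k => tk k * Real.log (tk k / sk k)) atTop
        (𝓝 (t * Real.log (t / sl))) := by
      rw [term_split ht0' (fun _ => hpos)]
      exact hconv.congr fun k => (term_split (ht0 k) (hsupp k)).symm
    exact hconv'.eventually (eventually_ge_nhds (by linarith))

lemma D2_ge_single {n m : ℕ} (A B : Fin n → Fin m → ℝ) (hA : ∀ i j, 0 ≤ A i j)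
    (hB1 : ∀ i j, B i j ≤ 1) (hsupp : ∀ i j, 0 < A i j → 0 < B i j)
    (i₀ : Fin n) (j₀ : Fin m) :
    A i₀ j₀ * Real.log (A i₀ j₀ / B i₀ j₀) - (n * m : ℝ) ≤ D2 A B := by
  set f : Fin n → Fin m → ℝ := fun i j => A i j * Real.log (A i j / B i j) with hf
  have hterm : ∀ i j, -1 ≤ f i j := fun i j =>
    term_ge_neg_one (hA i j) (hB1 i j) (hsupp i j)
  have cardm : ((univ.erase j₀).card : ℝ) = (m : ℝ) - 1 := by
    rw [Finset.card_erase_of_mem (mem_univ j₀), Finset.card_univ, Fintype.card_fin,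
      Nat.cast_sub j₀.pos]
    simp
  have cardn : ((univ.erase i₀).card : ℝ) = (n : ℝ) - 1 := by
    rw [Finset.card_erase_of_mem (mem_univ i₀), Finset.card_univ, Fintype.card_fin,
      Nat.cast_sub i₀.pos]
    simp
  have inner_ge : ∀ i, -(m:ℝ) ≤ ∑ j, f i j := by
    intro i
    calc -(m:ℝ) = ∑ _j : Fin m, (-1 : ℝ) := by simp
    _ ≤ ∑ j, f i j := Finset.sum_le_sum fun j _ => hterm i j
  have inner0 : f i₀ j₀ - ((m:ℝ) - 1) ≤ ∑ j, f i₀ j := by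
    have hsplit : ∑ j ∈ univ.erase j₀, f i₀ j + f i₀ j₀ = ∑ j, f i₀ j :=
      Finset.sum_erase_add _ _ (mem_univ j₀)
    have h1 : -((m:ℝ) - 1) ≤ ∑ j ∈ univ.erase j₀, f i₀ j := by
      calc -((m:ℝ) - 1) = ∑ _j ∈ univ.erase j₀, (-1 : ℝ) := by
            rw [Finset.sum_const, nsmul_eq_mul, cardm]; ring
      _ ≤ _ := Finset.sum_le_sum fun j _ => hterm i₀ j
    linarith
  have houter : f i₀ j₀ - ((m:ℝ) - 1) - (m:ℝ) * ((n:ℝ) - 1) ≤ ∑ i, ∑ j, f i j := by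
    have hsplit : ∑ i ∈ univ.erase i₀, (∑ j, f i j) + ∑ j, f i₀ j = ∑ i, ∑ j, f i j :=
      Finset.sum_erase_add _ _ (mem_univ i₀)
    have h1 : -((m:ℝ) * ((n:ℝ) - 1)) ≤ ∑ i ∈ univ.erase i₀, ∑ j, f i j := by
      calc -((m:ℝ) * ((n:ℝ) - 1)) = ∑ _i ∈ univ.erase i₀, -(m:ℝ) := by
            rw [Finset.sum_const, nsmul_eq_mul, cardn]; ring
      _ ≤ _ := Finset.sum_le_sum fun i _ => inner_ge i
    linarith
  have hD : D2 A B = ∑ i, ∑ j, f i j := rfl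
  have hexp : (m:ℝ) * ((n:ℝ) - 1) = (n:ℝ) * (m:ℝ) - (m:ℝ) := by ring
  rw [hD]
  have hfe : A i₀ j₀ * Real.log (A i₀ j₀ / B i₀ j₀) = f i₀ j₀ := rfl
  rw [hfe]
  linarith

theorem stmt10 {n m : ℕ} (P₁ P₂ : Fin n → ℝ) (Q₁ Q₂ : Fin m → ℝ)
    (hP₁ : IsProbVec P₁) (hQ₁ : IsProbVec Q₁) (hP₂ : IsProbVec P₂) (hQ₂ : IsProbVec Q₂)
    (S : ℕ → Fin n → Fin m → ℝ) (Slim : Fin n → Fin m → ℝ)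
    (hS : ∀ k, S k ∈ Coupling P₁ Q₁) (hSlim : Slim ∈ Coupling P₁ Q₁)
    (T : ℕ → Fin n → Fin m → ℝ) (Tlim : Fin n → Fin m → ℝ)
    (hT : ∀ k, IsIProj (S k) (Coupling P₂ Q₂) (T k))
    (hTlim : IsIProj Slim (Coupling P₂ Q₂) Tlim)
    (hconv : Tendsto (fun k => ∑ i, ∑ j, |S k i j - Slim i j|) atTop (𝓝 0)) :
    Tendsto (fun k => ∑ i, ∑ j, |T k i j - Tlim i j|) atTop (𝓝 0) := by
  -- entrywise convergence of S
  have hSe : ∀ i j, Tendsto (fun k => S k i j) atTop (𝓝 (Slim i j)) := by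
    intro i j
    have hb : ∀ k, |S k i j - Slim i j| ≤ ∑ i', ∑ j', |S k i' j' - Slim i' j'| := by
      intro k
      have h1 : |S k i j - Slim i j| ≤ ∑ j', |S k i j' - Slim i j'| :=
        Finset.single_le_sum (f := fun j' => |S k i j' - Slim i j'|)
          (fun j' _ => abs_nonneg _) (mem_univ j)
      have h2 : ∑ j', |S k i j' - Slim i j'| ≤ ∑ i', ∑ j', |S k i' j' - Slim i' j'| :=
        Finset.single_le_sum (f := fun i' => ∑ j', |S k i' j' - Slim i' j'|)
          (fun i' _ => Finset.sum_nonneg fun j' _ => abs_nonneg _) (mem_univ i)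
      linarith
    have h0 : Tendsto (fun k => |S k i j - Slim i j|) atTop (𝓝 0) :=
      squeeze_zero (fun k => abs_nonneg _) hb hconv
    rw [tendsto_iff_dist_tendsto_zero]
    simpa [Real.dist_eq] using h0
  -- reduce to entrywise convergence of T
  suffices hTe : ∀ i j, Tendsto (fun k => T k i j) atTop (𝓝 (Tlim i j)) by
    have h0 : Tendsto (fun k => ∑ i : Fin n, ∑ j : Fin m, |T k i j - Tlim i j|) atTop
        (𝓝 (∑ _i : Fin n, ∑ _j : Fin m, (0:ℝ))) := by
      refine tendsto_finset_sum _ fun i _ => tendsto_finset_sum _ fun j _ => ?_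
      have h1 := ((hTe i j).sub (tendsto_const_nhds (x := Tlim i j))).abs
      simpa using h1
    simpa using h0
  suffices hTt : Tendsto T atTop (𝓝 Tlim) by
    intro i j
    exact tendsto_pi_nhds.1 (tendsto_pi_nhds.1 hTt i) j
  -- basic inequalities
  have hT0 : ∀ k i j, 0 ≤ T k i j := fun k => (hT k).1.1
  have hS1 : ∀ k i j, S k i j ≤ 1 := fun k => coupling_le_one (hS k) hP₁
  have hSlim0 : ∀ i j, 0 ≤ Slim i j := hSlim.1
  have hTlim0 : ∀ i j, 0 ≤ Tlim i j := hTlim.1.1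
  apply tendsto_of_subseq_tendsto
  intro ns hns
  have hK : IsCompact (Set.Icc (0 : Fin n → Fin m → ℝ) 1) := isCompact_Icc
  have hmem : ∀ k, T (ns k) ∈ Set.Icc (0 : Fin n → Fin m → ℝ) 1 := by
    intro k
    refine Set.mem_Icc.2 ⟨Pi.le_def.mpr fun i => Pi.le_def.mpr fun j => ?_,
      Pi.le_def.mpr fun i => Pi.le_def.mpr fun j => ?_⟩
    · exact hT0 _ i j
    · exact coupling_le_one (hT (ns k)).1 hP₂ i j
  obtain ⟨T', hT'K, φ, hφ, hφt⟩ := hK.tendsto_subseq hmem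
  refine ⟨φ, ?_⟩
  set ψ : ℕ → ℕ := fun k => ns (φ k) with hψdef
  have hψ : Tendsto ψ atTop atTop := hns.comp hφ.tendsto_atTop
  have hψT : ∀ i j, Tendsto (fun k => T (ψ k) i j) atTop (𝓝 (T' i j)) := by
    intro i j
    exact tendsto_pi_nhds.1 (tendsto_pi_nhds.1 hφt i) j
  have hψS : ∀ i j, Tendsto (fun k => S (ψ k) i j) atTop (𝓝 (Slim i j)) :=
    fun i j => (hSe i j).comp hψ
  have hψsupp : ∀ k i j, 0 < T (ψ k) i j → 0 < S (ψ k) i j := fun k i j h =>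
    (hT (ψ k)).2.1 (show (0:ℝ) < T (ψ k) (i, j).1 (i, j).2 from h)
  -- eventual support inclusion
  have hesupp : ∀ᶠ k in atTop, ∀ p : Fin n × Fin m, 0 < Slim p.1 p.2 → 0 < S (ψ k) p.1 p.2 := by
    rw [Filter.eventually_all]
    intro p
    by_cases hp : 0 < Slim p.1 p.2
    · exact ((hψS p.1 p.2).eventually (eventually_gt_nhds hp)).mono fun k hk _ => hk
    · exact Eventually.of_forall fun k h => absurd h hp
  have hesupp' : ∀ᶠ k in atTop, ∀ U : Fin n → Fin m → ℝ,
      supp2 U ⊆ supp2 Slim → supp2 U ⊆ supp2 (S (ψ k)) :=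
    hesupp.mono fun k hk U hU p hp => hk p (hU hp)
  -- convergence of the upper bound
  have hTlimsupp : ∀ i j, 0 < Tlim i j → 0 < Slim i j := fun i j h =>
    hTlim.2.1 (show (0:ℝ) < Tlim (i, j).1 (i, j).2 from h)
  have hTlimS : Tendsto (fun k => D2 Tlim (S (ψ k))) atTop (𝓝 (D2 Tlim Slim)) :=
    tendsto_D2_fixed hTlim0 hTlimsupp hψS
  have hkey : ∀ᶠ k in atTop, D2 (T (ψ k)) (S (ψ k)) ≤ D2 Tlim (S (ψ k)) :=
    hesupp'.mono fun k hk => (hT (ψ k)).2.2 Tlim hTlim.1 (hk Tlim hTlim.2.1)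
  have hT'0 : ∀ i j, 0 ≤ T' i j := fun i j =>
    le_of_tendsto_of_tendsto' tendsto_const_nhds (hψT i j) fun k => hT0 _ i j
  -- Step A: support of the limit point
  have hT'supp : ∀ i j, 0 < T' i j → 0 < Slim i j := by
    intro i₀ j₀ hpos
    by_contra hns0
    have hSl0 : Slim i₀ j₀ = 0 := le_antisymm (not_lt.1 hns0) (hSlim0 i₀ j₀)
    have hpos' : ∀ᶠ k in atTop, 0 < T (ψ k) i₀ j₀ :=
      (hψT i₀ j₀).eventually (eventually_gt_nhds hpos)
    have hspos : ∀ᶠ k in atTop, 0 < S (ψ k) i₀ j₀ := hpos'.mono fun k h => hψsupp k i₀ j₀ h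
    have hlog : Tendsto (fun k => Real.log (S (ψ k) i₀ j₀)) atTop atBot := by
      apply Real.tendsto_log_nhdsGT_zero.comp
      rw [tendsto_nhdsWithin_iff]
      exact ⟨hSl0 ▸ hψS i₀ j₀, hspos⟩
    have h2 : Tendsto (fun k => T (ψ k) i₀ j₀ * (-Real.log (S (ψ k) i₀ j₀))) atTop atTop :=
      Tendsto.pos_mul_atTop hpos (hψT i₀ j₀) (tendsto_neg_atBot_atTop.comp hlog)
    have h3 : Tendsto (fun k => T (ψ k) i₀ j₀ * Real.log (T (ψ k) i₀ j₀)) atTop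
        (𝓝 (T' i₀ j₀ * Real.log (T' i₀ j₀))) :=
      (Real.continuous_mul_log.tendsto _).comp (hψT i₀ j₀)
    have heq : (fun k => T (ψ k) i₀ j₀ * Real.log (T (ψ k) i₀ j₀)
          + T (ψ k) i₀ j₀ * (-Real.log (S (ψ k) i₀ j₀)))
        =ᶠ[atTop] fun k => T (ψ k) i₀ j₀ * Real.log (T (ψ k) i₀ j₀ / S (ψ k) i₀ j₀) := by
      filter_upwards [hspos] with k hk2
      rw [term_split (hT0 _ i₀ j₀) (fun _ => hk2)]
      ring
    have h4 : Tendsto (fun k => T (ψ k) i₀ j₀ * Real.log (T (ψ k) i₀ j₀ / S (ψ k) i₀ j₀))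
        atTop atTop := Tendsto.congr' heq (h3.add_atTop h2)
    have h6 : Tendsto (fun k => D2 (T (ψ k)) (S (ψ k))) atTop atTop := by
      refine tendsto_atTop_mono' atTop ?_ (tendsto_atTop_add_const_right atTop (-(n*m:ℝ)) h4)
      refine Eventually.of_forall fun k => ?_
      have h5 := D2_ge_single (T (ψ k)) (S (ψ k)) (hT0 _) (hS1 _) (hψsupp k) i₀ j₀
      dsimp only
      linarith
    have hA := h6.eventually (eventually_ge_atTop (D2 Tlim Slim + 1))
    have hB := hTlimS.eventually (eventually_lt_nhds (lt_add_one (D2 Tlim Slim)))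
    obtain ⟨k, h1, h2', h3'⟩ := (hA.and (hB.and hkey)).exists
    linarith
  -- Step B: minimality of the limit point
  have hmin : ∀ U ∈ Coupling P₂ Q₂, supp2 U ⊆ supp2 Slim → D2 T' Slim ≤ D2 U Slim := by
    intro U hU hUsupp
    refine le_of_forall_pos_le_add fun ε hε => ?_
    have hUc : Tendsto (fun k => D2 U (S (ψ k))) atTop (𝓝 (D2 U Slim)) :=
      tendsto_D2_fixed hU.1
        (fun i j h => hUsupp (show (0:ℝ) < U (i, j).1 (i, j).2 from h)) hψS
    have hkeyU : ∀ᶠ k in atTop, D2 (T (ψ k)) (S (ψ k)) ≤ D2 U (S (ψ k)) :=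
      hesupp'.mono fun k hk => (hT (ψ k)).2.2 U hU (hk U hUsupp)
    have hup : ∀ᶠ k in atTop, D2 U (S (ψ k)) ≤ D2 U Slim + ε/2 :=
      hUc.eventually (eventually_le_nhds (by linarith))
    set δ : ℝ := (ε/2) / (n*m+1) with hδdef
    have hδ : 0 < δ := by positivity
    have hpp : ∀ (i : Fin n) (j : Fin m), ∀ᶠ k in atTop,
        T' i j * Real.log (T' i j / Slim i j) - δ
          ≤ T (ψ k) i j * Real.log (T (ψ k) i j / S (ψ k) i j) := by
      intro i j
      refine eventually_term_ge (hψT i j) (hψS i j) (fun k => hT0 _ i j) (fun k => hS1 _ i j)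
        (fun k => hψsupp k i j) (hSlim0 i j) ?_ hδ
      intro h0
      by_contra ht'
      have hlt : 0 < T' i j := lt_of_le_of_ne (hT'0 i j) (Ne.symm ht')
      have := hT'supp i j hlt
      rw [h0] at this
      exact lt_irrefl 0 this
    have hall : ∀ᶠ k in atTop, ∀ i j, T' i j * Real.log (T' i j / Slim i j) - δ
          ≤ T (ψ k) i j * Real.log (T (ψ k) i j / S (ψ k) i j) :=
      Filter.eventually_all.2 fun i => Filter.eventually_all.2 fun j => hpp i j
    have hlow : ∀ᶠ k in atTop, D2 T' Slim - ε/2 ≤ D2 (T (ψ k)) (S (ψ k)) := by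
      filter_upwards [hall] with k hk
      have h1 : ∑ i, ∑ j, (T' i j * Real.log (T' i j / Slim i j) - δ)
          ≤ D2 (T (ψ k)) (S (ψ k)) :=
        Finset.sum_le_sum fun i _ => Finset.sum_le_sum fun j _ => hk i j
      have h2 : ∑ i, ∑ j, (T' i j * Real.log (T' i j / Slim i j) - δ)
          = D2 T' Slim - (n:ℝ) * ((m:ℝ) * δ) := by
        rw [show D2 T' Slim = ∑ i, ∑ j, T' i j * Real.log (T' i j / Slim i j) from rfl]
        simp only [Finset.sum_sub_distrib, Finset.sum_const, Finset.card_univ,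
          Fintype.card_fin, nsmul_eq_mul]
      have hδeq : ((n:ℝ) * (m:ℝ) + 1) * δ = ε/2 := by
        rw [hδdef]
        field_simp
      have h3 : (n:ℝ) * ((m:ℝ) * δ) ≤ ε/2 := by nlinarith [hδ.le]
      linarith
    obtain ⟨k, h1, h2, h3⟩ := (hlow.and (hkeyU.and hup)).exists
    linarith
  -- Step C: the limit point is a coupling
  have hT'C : T' ∈ Coupling P₂ Q₂ := by
    refine ⟨hT'0, fun i => ?_, fun j => ?_⟩
    · have h1 : Tendsto (fun k => ∑ j, T (ψ k) i j) atTop (𝓝 (∑ j, T' i j)) :=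
        tendsto_finset_sum _ fun j _ => hψT i j
      have h2 : (fun k => ∑ j, T (ψ k) i j) = fun _ => P₂ i :=
        funext fun k => (hT (ψ k)).1.2.1 i
      rw [h2] at h1
      exact tendsto_nhds_unique h1 tendsto_const_nhds
    · have h1 : Tendsto (fun k => ∑ i, T (ψ k) i j) atTop (𝓝 (∑ i, T' i j)) :=
        tendsto_finset_sum _ fun i _ => hψT i j
      have h2 : (fun k => ∑ i, T (ψ k) i j) = fun _ => Q₂ j :=
        funext fun k => (hT (ψ k)).1.2.2 j
      rw [h2] at h1
      exact tendsto_nhds_unique h1 tendsto_const_nhds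
  -- Step D: conclude by uniqueness
  have hT'proj : IsIProj Slim (Coupling P₂ Q₂) T' :=
    ⟨hT'C, fun p hp => hT'supp p.1 p.2 hp, hmin⟩
  have hfin : T' = Tlim := iproj_unique hT'proj hTlim
  rw [← hfin]
  exact hφt
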